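/- Suppose that for every u ∈ ℝⁿ the limit C_i(u) := lim_{t→∞} f_i(t H_i u)/t exists and is finite. Then for every v ∈ ℝ^{m_i} and every δ > 0 there exists N such that for all t ≥ N and all u ∈ ℝⁿ with ‖u‖ = 1, f_i(v + (t+1) H_i u) − f_i(v + t H_i u) ≥ C_i(u) − δ. -/

import Mathlib

open Filter

/-- Slope through the origin is monotone for a convex function vanishing at 0. -/
lemma aux_slope_mono {m : ℕ} {f : (Fin m → ℝ) → ℝ} (hconv : ConvexOn ℝ Set.univ f)
    (hzero : f 0 = 0) (w : Fin m → ℝ) {s t : ℝ} (hs : 0 < s) (hst : s ≤ t) :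
    f (s • w) / s ≤ f (t • w) / t := by
  have ht : 0 < t := hs.trans_le hst
  have h1 : (s/t) • (t • w) + (1 - s/t) • (0 : Fin m → ℝ) = s • w := by
    rw [smul_zero, add_zero, smul_smul]
    congr 1
    field_simp
  have h : f ((s/t) • (t • w) + (1 - s/t) • (0 : Fin m → ℝ))
      ≤ (s/t) * f (t • w) + (1 - s/t) * f 0 :=
    hconv.2 (Set.mem_univ (t • w)) (Set.mem_univ (0 : Fin m → ℝ))
      (by positivity) (by rw [sub_nonneg]; exact div_le_one_of_le₀ hst ht.le) (by ring)
  rw [h1, hzero, mul_zero, add_zero] at h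
  rw [div_le_div_iff₀ hs ht]
  have h2 := mul_le_mul_of_nonneg_right h ht.le
  have h3 : s / t * f (t • w) * t = f (t • w) * s := by field_simp
  linarith

theorem increment_ge_C_sub_delta (n mi : ℕ)
    (H : Matrix (Fin mi) (Fin n) ℝ) (f : (Fin mi → ℝ) → ℝ)
    (hconv : ConvexOn ℝ Set.univ f)
    (hsym : ∀ u, f u = f (-u))
    (hnonneg : ∀ u, 0 ≤ f u)
    (hzero : f 0 = 0)
    (C : EuclideanSpace ℝ (Fin n) → ℝ)
    (hC : ∀ u : EuclideanSpace ℝ (Fin n),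
      Filter.Tendsto (fun t : ℝ => f (t • H.mulVec u) / t) Filter.atTop (nhds (C u))) :
    ∀ (v : Fin mi → ℝ) (δ : ℝ), 0 < δ → ∃ N : ℝ, ∀ t : ℝ, N ≤ t →
      ∀ u : EuclideanSpace ℝ (Fin n), ‖u‖ = 1 →
        C u - δ ≤ f (v + (t + 1) • H.mulVec u) - f (v + t • H.mulVec u) := by
  intro v δ hδ
  have hfc : Continuous f := hconv.locallyLipschitz.continuous
  have hmc : Continuous (fun u : EuclideanSpace ℝ (Fin n) => H.mulVec u) := by
    let L : EuclideanSpace ℝ (Fin n) →ₗ[ℝ] (Fin mi → ℝ) :=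
      { toFun := fun u => H.mulVec u
        map_add' := fun x y => H.mulVec_add x y
        map_smul' := fun c x => H.mulVec_smul c x }
    exact L.continuous_of_finiteDimensional
  -- C is convex, hence continuous
  have hCconv : ConvexOn ℝ Set.univ C := by
    refine ⟨convex_univ, ?_⟩
    intro x _ y _ a b ha hb hab
    refine le_of_tendsto_of_tendsto (hC (a • x + b • y))
      (((hC x).const_mul a).add ((hC y).const_mul b)) ?_
    filter_upwards [eventually_gt_atTop (0 : ℝ)] with t ht
    have hW : H.mulVec (a • x + b • y) = a • H.mulVec x + b • H.mulVec y := by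
      rw [Matrix.mulVec_add, Matrix.mulVec_smul, Matrix.mulVec_smul]
    have h2 : t • (a • H.mulVec x + b • H.mulVec y)
        = a • (t • H.mulVec x) + b • (t • H.mulVec y) := by
      rw [smul_add, smul_comm t a, smul_comm t b]
    have h : f (a • (t • H.mulVec x) + b • (t • H.mulVec y))
        ≤ a * f (t • H.mulVec x) + b * f (t • H.mulVec y) :=
      hconv.2 (Set.mem_univ (t • H.mulVec x)) (Set.mem_univ (t • H.mulVec y)) ha hb hab
    show f (t • H.mulVec (a • x + b • y)) / t
        ≤ a * (f (t • H.mulVec x) / t) + b * (f (t • H.mulVec y) / t)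
    rw [hW, h2]
    have h3 : a * (f (t • H.mulVec x) / t) + b * (f (t • H.mulVec y) / t)
        = (a * f (t • H.mulVec x) + b * f (t • H.mulVec y)) / t := by ring
    rw [h3]
    exact div_le_div_of_nonneg_right h ht.le |>.trans_eq rfl
  have hCc : Continuous C := hCconv.locallyLipschitz.continuous
  -- open increasing cover of the sphere
  set U : ℕ → Set (EuclideanSpace ℝ (Fin n)) :=
    fun k => {u | C u - δ/2 < f (((k : ℝ) + 1) • H.mulVec u) / ((k : ℝ) + 1)} with hU
  have hUopen : ∀ k, IsOpen (U k) := fun k =>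
    isOpen_lt (hCc.sub continuous_const) (by exact (hfc.comp (hmc.const_smul ((k:ℝ)+1))).div_const ((k:ℝ)+1))
  have hUmono : ∀ k l : ℕ, k ≤ l → U k ⊆ U l := by
    intro k l hkl u hu
    have hcast : (k : ℝ) ≤ l := Nat.cast_le.2 hkl
    have : f (((k:ℝ)+1) • H.mulVec u) / ((k:ℝ)+1) ≤ f (((l:ℝ)+1) • H.mulVec u) / ((l:ℝ)+1) :=
      aux_slope_mono hconv hzero _ (by positivity) (by linarith)
    exact lt_of_lt_of_le hu this
  have hcover : Metric.sphere (0 : EuclideanSpace ℝ (Fin n)) 1 ⊆ ⋃ k, U k := by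
    intro u _
    have h := (hC u).eventually (eventually_gt_nhds (show C u - δ/2 < C u by linarith))
    rw [eventually_atTop] at h
    obtain ⟨t₀, ht₀⟩ := h
    obtain ⟨k, hk⟩ := exists_nat_ge t₀
    exact Set.mem_iUnion.2 ⟨k, ht₀ _ (by linarith)⟩
  obtain ⟨s, hs⟩ := (isCompact_sphere (0 : EuclideanSpace ℝ (Fin n)) 1).elim_finite_subcover
    U hUopen hcover
  set K : ℕ := s.sup id with hK
  have hsphere : ∀ u : EuclideanSpace ℝ (Fin n), ‖u‖ = 1 → u ∈ U K := by
    intro u hu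
    have hmem : u ∈ Metric.sphere (0 : EuclideanSpace ℝ (Fin n)) 1 := by
      simpa [mem_sphere_zero_iff_norm] using hu
    obtain ⟨k, hk, huk⟩ := Set.mem_iUnion₂.1 (hs hmem)
    exact hUmono k K (Finset.le_sup (f := id) hk) huk
  refine ⟨max (2 * ((K : ℝ) + 1)) (4 * f v / δ), ?_⟩
  intro t ht u hu
  set w : Fin mi → ℝ := H.mulVec u with hw
  have htK : 2 * ((K : ℝ) + 1) ≤ t := le_trans (le_max_left _ _) ht
  have htv : 4 * f v / δ ≤ t := le_trans (le_max_right _ _) ht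
  have ht0 : (0:ℝ) < t := lt_of_lt_of_le (by positivity) htK
  -- increment ≥ secant slope
  have hB : f (v + t • w) - f v ≤ t * (f (v + (t+1) • w) - f (v + t • w)) := by
    have hcomb : (t/(t+1)) • (v + (t+1) • w) + (1 - t/(t+1)) • v = v + t • w := by
      have h1 : (1 : ℝ) - t/(t+1) = 1/(t+1) := by field_simp; ring
      have h2 : t / (t + 1) * (t + 1) = t := by field_simp
      have h3 : t / (t + 1) + 1 / (t + 1) = 1 := by field_simp
      rw [h1, smul_add, smul_smul, h2, add_right_comm, ← add_smul, h3, one_smul]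
    have h : f ((t/(t+1)) • (v + (t+1) • w) + (1 - t/(t+1)) • v)
        ≤ (t/(t+1)) * f (v + (t+1) • w) + (1 - t/(t+1)) * f v :=
      hconv.2 (Set.mem_univ (v + (t+1) • w)) (Set.mem_univ v)
        (by positivity) (by rw [sub_nonneg]; exact div_le_one_of_le₀ (by linarith) (by linarith))
        (by ring)
    rw [hcomb] at h
    have ht1 : (0:ℝ) < t + 1 := by linarith
    have h2 := mul_le_mul_of_nonneg_right h ht1.le
    have e1 : (t/(t+1) * f (v + (t+1) • w) + (1 - t/(t+1)) * f v) * (t+1)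
        = t * f (v + (t+1) • w) + f v := by field_simp; ring
    nlinarith [h2]
  -- symmetry lower bound
  have hCsym : 2 * f ((t/2) • w) - f v ≤ f (v + t • w) := by
    have hcomb : (1/2 : ℝ) • (v + t • w) + (1/2 : ℝ) • (-v) = (t/2) • w := by
      rw [smul_add, smul_neg, smul_smul]
      have : (1/2 : ℝ) * t = t/2 := by ring
      rw [this]
      module
    have h : f ((1/2 : ℝ) • (v + t • w) + (1/2 : ℝ) • (-v))
        ≤ (1/2 : ℝ) * f (v + t • w) + (1/2 : ℝ) * f (-v) :=
      hconv.2 (Set.mem_univ (v + t • w)) (Set.mem_univ (-v))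
        (by norm_num) (by norm_num) (by norm_num)
    rw [hcomb, ← hsym v] at h
    linarith
  -- slope bound at t/2 using the cover
  have hK2 : (K : ℝ) + 1 ≤ t / 2 := by linarith
  have hKslope : C u - δ/2 < f (((K:ℝ)+1) • w) / ((K:ℝ)+1) := hsphere u hu
  have hmono : f (((K:ℝ)+1) • w) / ((K:ℝ)+1) ≤ f ((t/2) • w) / (t/2) :=
    aux_slope_mono hconv hzero _ (by positivity) hK2
  have ht2 : (0:ℝ) < t/2 := by linarith
  have hfin : C u - δ/2 < f ((t/2) • w) / (t/2) := lt_of_lt_of_le hKslope hmono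
  have hfin2 : (C u - δ/2) * (t/2) < f ((t/2) • w) := (lt_div_iff₀ ht2).1 hfin
  have hfv : 2 * f v ≤ t * δ / 2 := by
    have h0 := hnonneg v
    rw [div_le_iff₀ hδ] at htv
    nlinarith
  have key : t * (C u - δ) < t * (f (v + (t+1) • w) - f (v + t • w)) := by nlinarith
  exact le_of_lt (lt_of_mul_lt_mul_left key ht0.le)
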